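/- Let F be a distribution on [-c,∞) for some c ≥ 0 such that m(F) = ∫ e^{γy} F(dy) < ∞ and F^{*2} ∈ L(γ) for some γ ≥ 0. If a(F) := limsup_{k→∞} limsup_{x→∞} ∫_{(k, x-k]} F̄(x-y) F(dy) / (F^{*2})̄(x) < 1, then F ∈ OS. -/

import Mathlib

open MeasureTheory Filter Set Asymptotics

/-- The tail `F̄(x) = μ((x,∞))` of a distribution `μ` on `ℝ`. -/
noncomputable def tail (μ : MeasureTheory.Measure ℝ) (x : ℝ) : ℝ := (μ (Set.Ioi x)).toReal

/-- Convolution of two distributions on `ℝ`. -/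
noncomputable def mconv (μ ν : MeasureTheory.Measure ℝ) : MeasureTheory.Measure ℝ :=
  MeasureTheory.Measure.map (fun p : ℝ × ℝ => p.1 + p.2) (μ.prod ν)

/-- `iconv μ k` is the `k`-fold convolution `μ^{*k}` (with `μ^{*0} = δ₀`). -/
noncomputable def iconv (μ : MeasureTheory.Measure ℝ) : ℕ → MeasureTheory.Measure ℝ
  | 0 => MeasureTheory.Measure.dirac 0
  | n + 1 => mconv (iconv μ n) μ

/-- The class `L(γ)`: `F̄(x-t) ~ e^{γt} F̄(x)` as `x → ∞`, for every `t`. -/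
def MemL (γ : ℝ) (μ : MeasureTheory.Measure ℝ) : Prop :=
  ∀ t : ℝ, Filter.Tendsto (fun x => tail μ (x - t) / tail μ x) Filter.atTop
    (nhds (Real.exp (γ * t)))

/-- The class `OS`: `limsup_{x→∞} (F*F)̄(x) / F̄(x) < ∞`. -/
def MemOS (μ : MeasureTheory.Measure ℝ) : Prop :=
  Filter.IsBoundedUnder (· ≤ ·) Filter.atTop (fun x => tail (mconv μ μ) x / tail μ x)

lemma meas_Ioi (μ : Measure ℝ) : Measurable (fun t : ℝ => μ (Set.Ioi t)) :=
  Antitone.measurable (fun _ _ hab => measure_mono (Set.Ioi_subset_Ioi hab))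

lemma tail_meas (μ : Measure ℝ) : Measurable (tail μ) :=
  ENNReal.measurable_toReal.comp (meas_Ioi μ)

lemma tail_nonneg (μ : Measure ℝ) (x : ℝ) : 0 ≤ tail μ x := ENNReal.toReal_nonneg

lemma toReal_prob_le_one {μ : Measure ℝ} [IsProbabilityMeasure μ] (s : Set ℝ) :
    (μ s).toReal ≤ 1 := by
  rw [← ENNReal.toReal_one]
  exact ENNReal.toReal_mono ENNReal.one_ne_top prob_le_one

lemma tail_le_one (μ : Measure ℝ) [IsProbabilityMeasure μ] (x : ℝ) : tail μ x ≤ 1 :=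
  toReal_prob_le_one _

lemma tail_anti (μ : Measure ℝ) [IsFiniteMeasure μ] : Antitone (tail μ) := fun _ _ hab =>
  ENNReal.toReal_mono (measure_ne_top _ _) (measure_mono (Set.Ioi_subset_Ioi hab))

lemma integrable_tail_shift (F : Measure ℝ) [IsProbabilityMeasure F] (x : ℝ) :
    Integrable (fun y => tail F (x - y)) F := by
  refine ⟨((tail_meas F).comp (measurable_const.sub measurable_id)).aestronglyMeasurable, ?_⟩
  refine HasFiniteIntegral.of_bounded (C := 1) (ae_of_all _ fun y => ?_)
  rw [Real.norm_eq_abs, abs_of_nonneg (tail_nonneg _ _)]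
  exact tail_le_one _ _

lemma tail_mconv (F : Measure ℝ) [IsProbabilityMeasure F] (x : ℝ) :
    tail (mconv F F) x = ∫ y, tail F (x - y) ∂F := by
  have h1 : mconv F F (Set.Ioi x) = ∫⁻ a, F (Set.Ioi (x - a)) ∂F := by
    rw [mconv, Measure.map_apply measurable_add measurableSet_Ioi,
        Measure.prod_apply (measurable_add measurableSet_Ioi)]
    refine lintegral_congr fun a => ?_
    congr 1
    ext b
    simp [Set.mem_Ioi, sub_lt_iff_lt_add, add_comm]
  have hma : AEMeasurable (fun a => F (Set.Ioi (x - a))) F :=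
    ((meas_Ioi F).comp (show Measurable fun a : ℝ => x - a from
      measurable_const.sub measurable_id)).aemeasurable
  rw [tail, h1, ← integral_toReal hma (ae_of_all _ fun a => measure_lt_top _ _)]
  rfl

theorem stmt9 (c : ℝ) (hc : 0 ≤ c) (F : Measure ℝ) [IsProbabilityMeasure F]
    (hs : F (Set.Iio (-c)) = 0) (γ : ℝ) (hγ : 0 ≤ γ)
    (hm : MeasureTheory.Integrable (fun y => Real.exp (γ * y)) F)
    (hL2 : MemL γ (mconv F F))
    (ha : Filter.limsup (fun k : ℝ =>
      Filter.limsup (fun x : ℝ =>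
        (∫ y in Set.Ioc k (x - k), tail F (x - y) ∂F) / tail (mconv F F) x) Filter.atTop)
      Filter.atTop < 1) :
    MemOS F := by
  classical
  set T : ℝ → ℝ := fun x => tail (mconv F F) x with hTdef
  set M : ℝ → ℝ → ℝ := fun k x => ∫ y in Set.Ioc k (x - k), tail F (x - y) ∂F with hMdef
  set r : ℝ → ℝ → ℝ := fun k x => M k x / T x with hrdef
  set g : ℝ → ℝ := fun k => limsup (r k) atTop with hgdef
  have hga : limsup g atTop < 1 := ha
  have hTnn : ∀ x, 0 ≤ T x := fun x => tail_nonneg _ _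
  have hMnn : ∀ k x, 0 ≤ M k x := fun k x =>
    setIntegral_nonneg measurableSet_Ioc (fun y _ => tail_nonneg _ _)
  have hMle : ∀ k x, M k x ≤ T x := fun k x => by
    rw [hTdef]; simp only
    rw [tail_mconv]
    exact setIntegral_le_integral (integrable_tail_shift F x) (ae_of_all _ fun y => tail_nonneg _ _)
  have hr0 : ∀ k x, 0 ≤ r k x := fun k x => div_nonneg (hMnn k x) (hTnn x)
  have hr1 : ∀ k x, r k x ≤ 1 := by
    intro k x
    rcases eq_or_lt_of_le (hTnn x) with h | h
    · simp only [hrdef, ← h, div_zero, zero_le_one]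
    · exact (div_le_one h).mpr (hMle k x)
  have hrbdd : ∀ k, IsBoundedUnder (· ≤ ·) atTop (r k) :=
    fun k => ⟨1, eventually_map.mpr (Eventually.of_forall fun x => hr1 k x)⟩
  have hgle1 : ∀ k, g k ≤ 1 := by
    intro k
    have hbb : IsBoundedUnder (· ≥ ·) atTop (r k) :=
      ⟨0, eventually_map.mpr (Eventually.of_forall fun x => hr0 k x)⟩
    exact limsup_le_of_le hbb.isCoboundedUnder_le (Eventually.of_forall fun x => hr1 k x)
  set b : ℝ := (limsup g atTop + 1) / 2 with hbdef
  have hb1 : b < 1 := by rw [hbdef]; linarith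
  have hlb : limsup g atTop < b := by rw [hbdef]; linarith
  have hbpos : 0 < 1 - b := by linarith
  obtain ⟨k, hk⟩ := (eventually_lt_of_limsup_lt hlb
    ⟨1, eventually_map.mpr (Eventually.of_forall hgle1)⟩).exists
  have hrk : ∀ᶠ x in atTop, r k x < b := eventually_lt_of_limsup_lt hk (hrbdd k)
  set C₁ : ℝ := 2 / (1 - b) with hC₁def
  have hC₁pos : 0 < C₁ := by positivity
  have hE1 : ∀ᶠ x in atTop, T x ≤ C₁ * tail F (x - k) := by
    filter_upwards [hrk, eventually_ge_atTop (2 * k)] with x hx h2k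
    have hkx : k ≤ x - k := by linarith
    have hint := integrable_tail_shift F x
    have hsplit : T x = (∫ y in Set.Iic k, tail F (x - y) ∂F) + M k x
        + (∫ y in Set.Ioi (x - k), tail F (x - y) ∂F) := by
      rw [hTdef]; simp only
      rw [tail_mconv, ← setIntegral_univ, ← Set.Iic_union_Ioi (a := x - k),
        setIntegral_union (Set.Iic_disjoint_Ioi le_rfl) measurableSet_Ioi
          hint.integrableOn hint.integrableOn,
        ← Set.Iic_union_Ioc_eq_Iic hkx,
        setIntegral_union (Set.Iic_disjoint_Ioc le_rfl) measurableSet_Ioc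
          hint.integrableOn hint.integrableOn]
    have hI1 : ∫ y in Set.Iic k, tail F (x - y) ∂F ≤ tail F (x - k) := by
      calc ∫ y in Set.Iic k, tail F (x - y) ∂F
          ≤ ∫ _ in Set.Iic k, tail F (x - k) ∂F := by
            refine setIntegral_mono_on hint.integrableOn
              (integrableOn_const (measure_lt_top _ _).ne) measurableSet_Iic
              (fun y hy => tail_anti F ?_)
            simp only [Set.mem_Iic] at hy
            linarith
        _ = (F (Set.Iic k)).toReal • tail F (x - k) := setIntegral_const _
        _ ≤ tail F (x - k) := by
            rw [smul_eq_mul]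
            exact mul_le_of_le_one_left (tail_nonneg _ _) (toReal_prob_le_one _)
    have hI3 : ∫ y in Set.Ioi (x - k), tail F (x - y) ∂F ≤ tail F (x - k) := by
      calc ∫ y in Set.Ioi (x - k), tail F (x - y) ∂F
          ≤ ∫ _ in Set.Ioi (x - k), (1 : ℝ) ∂F :=
            setIntegral_mono_on hint.integrableOn
              (integrableOn_const (measure_lt_top _ _).ne) measurableSet_Ioi
              (fun y _ => tail_le_one F _)
        _ = (F (Set.Ioi (x - k))).toReal • (1 : ℝ) := setIntegral_const _
        _ = tail F (x - k) := by rw [smul_eq_mul, mul_one]; rfl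
    have hMb : M k x ≤ b * T x := by
      rcases eq_or_lt_of_le (hTnn x) with h | h
      · have h1 := hMle k x
        have h2 := hMnn k x
        nlinarith
      · have := (div_lt_iff₀ h).mp hx
        linarith
    have hfin : (1 - b) * T x ≤ 2 * tail F (x - k) := by linarith
    rw [hC₁def, div_mul_eq_mul_div, le_div_iff₀ hbpos]
    linarith
  have hεpos : 0 < Real.exp (γ * (-k)) / 2 := by positivity
  set ε : ℝ := Real.exp (γ * (-k)) / 2 with hεdef
  have hE2 : ∀ᶠ x in atTop, ε < T (x + k) / T x := by
    have h' : ε < Real.exp (γ * (-k)) := by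
      rw [hεdef]; linarith [Real.exp_pos (γ * (-k))]
    have := (hL2 (-k)).eventually (eventually_gt_nhds h')
    simpa [sub_neg_eq_add] using this
  have hE1' : ∀ᶠ x in atTop, T (x + k) ≤ C₁ * tail F x := by
    have := (tendsto_atTop_add_const_right atTop k tendsto_id).eventually hE1
    simpa [add_sub_cancel_right] using this
  refine ⟨C₁ / ε, eventually_map.mpr ?_⟩
  filter_upwards [hE1', hE2] with x h1 h2
  have hTx : 0 < T x := by
    rcases eq_or_lt_of_le (hTnn x) with h | h
    · rw [← h, div_zero] at h2; linarith
    · exact h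
  have h3 : ε * T x < T (x + k) := (lt_div_iff₀ hTx).mp h2
  have h4 : T x ≤ (C₁ / ε) * tail F x := by
    rw [div_mul_eq_mul_div, le_div_iff₀ hεpos]
    nlinarith
  rcases eq_or_lt_of_le (tail_nonneg F x) with h0 | h0
  · rw [← h0, mul_zero] at h4
    linarith
  · rw [div_le_iff₀ h0]
    linarith
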